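/- Fix λ > 0. If z* = (w*, b*) is a local minimizer of (P_{0/1}), then there exists α* ∈ ℝ^m satisfying (KKT-PI) at z*: w* = Σ_{i=1}^m α*_i y_i x_i; α*_i ≥ 0 and α*_i u_i(z*) = 0 for all i ∈ I₀* := {i : u_i(z*) ≤ 0}; α*_i = 0 for all i ∉ I₀*; and Σ_i y_i α*_i = 0. -/

import Mathlib

open scoped RealInnerProductSpace BigOperators

noncomputable section

/-- The 0/1 loss: `1` if `t > 0`, `0` otherwise. -/
def l01 (t : ℝ) : ℝ := if 0 < t then 1 else 0

/-- The ramp loss with parameter `γ`. -/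
def ramp (γ t : ℝ) : ℝ := if γ < t then 1 else if 0 ≤ t then t else 0

variable {n m : ℕ}

/-- The margin residual `u_i(z) = 1 - y_i (⟨w, x_i⟩ + b)` for `z = (w, b)`. -/
def uu (x : Fin m → EuclideanSpace ℝ (Fin n)) (y : Fin m → ℝ)
    (z : EuclideanSpace ℝ (Fin n) × ℝ) (i : Fin m) : ℝ :=
  1 - y i * (⟪z.1, x i⟫ + z.2)

/-- The 0/1-loss SVM objective `F_{0/1}`. -/
def F01 (x : Fin m → EuclideanSpace ℝ (Fin n)) (y : Fin m → ℝ) (lam : ℝ)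
    (z : EuclideanSpace ℝ (Fin n) × ℝ) : ℝ :=
  (1 / 2) * ‖z.1‖ ^ 2 + lam * ∑ i, l01 (uu x y z i)

/-- The hinge-loss SVM objective `F₁(z, c)`. -/
def F1 (x : Fin m → EuclideanSpace ℝ (Fin n)) (y : Fin m → ℝ)
    (c : EuclideanSpace ℝ (Fin m)) (z : EuclideanSpace ℝ (Fin n) × ℝ) : ℝ :=
  (1 / 2) * ‖z.1‖ ^ 2 + ∑ i, c i * max (uu x y z i) 0

/-- The dual quadratic objective `G(α) = (1/2)⟨α, Qα⟩ - Σ αᵢ`,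
where `Q_{ij} = y_i y_j ⟨x_i, x_j⟩`. -/
def Gfun (x : Fin m → EuclideanSpace ℝ (Fin n)) (y : Fin m → ℝ)
    (α : EuclideanSpace ℝ (Fin m)) : ℝ :=
  (1 / 2) * ∑ i, ∑ j, α i * (y i * y j * ⟪x i, x j⟫) * α j - ∑ i, α i

/-- The ℓ₀ "norm": the number of nonzero entries. -/
def norm0 (α : EuclideanSpace ℝ (Fin m)) : ℝ := (({i | α i ≠ 0} : Set (Fin m)).ncard : ℝ)

/-- Feasibility for the dual problem `(D_{0/1})`. -/
def DFeas (y : Fin m → ℝ) (α : EuclideanSpace ℝ (Fin m)) : Prop :=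
  (∀ i, 0 ≤ α i) ∧ ∑ i, y i * α i = 0

/-- `α*` is a local minimizer of the dual problem `(D_{0/1})` with parameter `μ`. -/
def DLocalMin (x : Fin m → EuclideanSpace ℝ (Fin n)) (y : Fin m → ℝ) (μ : ℝ)
    (αs : EuclideanSpace ℝ (Fin m)) : Prop :=
  DFeas y αs ∧ ∃ ε > 0, ∀ α : EuclideanSpace ℝ (Fin m), DFeas y α → dist α αs ≤ ε →
    Gfun x y αs + μ * norm0 αs ≤ Gfun x y α + μ * norm0 α

/-- The KKT system (KKT-T*) for `(D_I)` with `I = T* = {i : α*_i ≠ 0}`: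
`Qα* - 1 + u* + b* y = 0`; `α*_i ≥ 0`, `u*_i ≤ 0`, `α*_i u*_i = 0` on `T*`;
(`α*_i = 0` off `T*` holds by definition of `T*`); and `⟨y, α*⟩ = 0`. -/
def KKTT (x : Fin m → EuclideanSpace ℝ (Fin n)) (y : Fin m → ℝ)
    (αs us : EuclideanSpace ℝ (Fin m)) (bs : ℝ) : Prop :=
  (∀ i, (∑ j, (y i * y j * ⟪x i, x j⟫) * αs j) - 1 + us i + bs * y i = 0) ∧
  (∀ i, αs i ≠ 0 → 0 ≤ αs i ∧ us i ≤ 0 ∧ αs i * us i = 0) ∧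
  ∑ i, y i * αs i = 0

/-- The ramp-loss SVM objective of `(P_r)`. -/
def PrObj (x : Fin m → EuclideanSpace ℝ (Fin n)) (y : Fin m → ℝ) (ρ γ : ℝ)
    (z : EuclideanSpace ℝ (Fin n) × ℝ) : ℝ :=
  (1 / 2) * ‖z.1‖ ^ 2 + ρ * ∑ i, ramp γ (uu x y z i)

/-- The penalty objective of problem (pen). -/
def Pen (x : Fin m → EuclideanSpace ℝ (Fin n)) (y : Fin m → ℝ) (ρ γ : ℝ)
    (p : (EuclideanSpace ℝ (Fin n) × ℝ) × EuclideanSpace ℝ (Fin m)) : ℝ :=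
  (1 / 2) * ‖p.1.1‖ ^ 2 + ρ * ∑ i, |uu x y p.1 i - p.2 i| + ρ * γ * ∑ i, l01 (p.2 i)

/-- The smooth part `Φ(z, v)` of the penalty objective. -/
def Phi (x : Fin m → EuclideanSpace ℝ (Fin n)) (y : Fin m → ℝ) (ρ : ℝ)
    (p : (EuclideanSpace ℝ (Fin n) × ℝ) × EuclideanSpace ℝ (Fin m)) : ℝ :=
  (1 / 2) * ‖p.1.1‖ ^ 2 + ρ * ∑ i, |uu x y p.1 i - p.2 i|

/-- The KKT system (KKT-PI) for `(P_{0/1})` at `z*`. -/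
def KKTPI (x : Fin m → EuclideanSpace ℝ (Fin n)) (y : Fin m → ℝ)
    (zs : EuclideanSpace ℝ (Fin n) × ℝ) (αs : EuclideanSpace ℝ (Fin m)) : Prop :=
  zs.1 = ∑ i, (αs i * y i) • x i ∧
  (∀ i, uu x y zs i ≤ 0 → 0 ≤ αs i ∧ αs i * uu x y zs i = 0) ∧
  (∀ i, ¬ uu x y zs i ≤ 0 → αs i = 0) ∧
  ∑ i, y i * αs i = 0


open Topology in
/-- Carathéodory for cones: a nonnegative combination can be rewritten as a
nonnegative combination supported on a linearly independent subfamily. -/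
private theorem cone_cara_aux {ι E : Type*} [Fintype ι] [DecidableEq ι] [AddCommGroup E] [Module ℝ E]
    (v : ι → E) :
    ∀ (N : ℕ) (α : ι → ℝ), (∀ i, 0 ≤ α i) →
      (Finset.univ.filter fun i => α i ≠ 0).card ≤ N →
      ∃ (t : Finset ι) (β : ι → ℝ), LinearIndependent ℝ (fun i : t => v i) ∧
        (∀ i, 0 ≤ β i) ∧ (∀ i ∉ t, β i = 0) ∧ ∑ i, β i • v i = ∑ i, α i • v i := by
  intro N
  induction N with
  | zero =>
    intro α hα hcard
    have hz : ∀ i, α i = 0 := by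
      intro i
      by_contra h
      have : i ∈ Finset.univ.filter fun i => α i ≠ 0 := by simp [h]
      have := Finset.card_pos.2 ⟨i, this⟩
      omega
    refine ⟨∅, 0, ?_, by simp, by simp, by simp [hz]⟩
    have : IsEmpty ((∅ : Finset ι) : Set ι) := by simp
    exact linearIndependent_empty_type
  | succ N ih =>
    intro α hα hcard
    set s : Finset ι := Finset.univ.filter fun i => α i ≠ 0 with hs
    by_cases hli : LinearIndependent ℝ (fun i : s => v i)
    · refine ⟨s, α, hli, hα, ?_, rfl⟩
      intro i hi
      by_contra h
      exact hi (by simp [hs, h])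
    · -- obtain a nontrivial relation supported on s
      obtain ⟨g, hg0, j0, hgj0⟩ := Fintype.not_linearIndependent_iff.1 hli
      -- extend g to ι
      set γ' : ι → ℝ := fun i => if h : i ∈ s then g ⟨i, h⟩ else 0 with hγ'
      have hγ'sum : ∑ i, γ' i • v i = 0 := by
        rw [← Finset.sum_subset (Finset.subset_univ s)]
        · rw [← hg0, ← Finset.sum_coe_sort s (fun i => γ' i • v i)]
          refine Finset.sum_congr rfl fun i _ => ?_
          simp [hγ', i.2]
        · intro i _ hi; simp [hγ', hi]
      have hγ'supp : ∀ i, i ∉ s → γ' i = 0 := fun i hi => by simp [hγ', hi]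
      have hγ'ne : γ' j0.1 ≠ 0 := by simpa [hγ', j0.2] using hgj0
      -- WLOG some γ i > 0
      obtain ⟨γ, hγsum, hγsupp, j1, hγj1⟩ :
          ∃ γ : ι → ℝ, (∑ i, γ i • v i = 0) ∧ (∀ i, i ∉ s → γ i = 0) ∧ ∃ j, 0 < γ j := by
        rcases lt_or_gt_of_ne hγ'ne with h | h
        · exact ⟨-γ', by simp [hγ'sum], fun i hi => by simp [hγ'supp i hi], j0.1, by simpa using h⟩
        · exact ⟨γ', hγ'sum, hγ'supp, j0.1, h⟩
      -- minimum ratio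
      set P : Finset ι := Finset.univ.filter fun i => 0 < γ i with hP
      have hPne : P.Nonempty := ⟨j1, by simp [hP, hγj1]⟩
      obtain ⟨i0, hi0P, hi0⟩ := Finset.exists_mem_eq_inf' hPne (fun i => α i / γ i)
      set θ : ℝ := α i0 / γ i0 with hθ
      have hγi0 : 0 < γ i0 := by simpa [hP] using hi0P
      have hθ0 : 0 ≤ θ := div_nonneg (hα i0) hγi0.le
      have hθmin : ∀ i, 0 < γ i → θ ≤ α i / γ i := by
        intro i hi
        have h2 : P.inf' hPne (fun i => α i / γ i) ≤ α i / γ i :=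
          Finset.inf'_le _ (by simp [hP, hi])
        rw [hi0] at h2
        exact h2
      set α' : ι → ℝ := fun i => α i - θ * γ i with hα'
      have hα'0 : ∀ i, 0 ≤ α' i := by
        intro i
        rcases le_or_gt (γ i) 0 with h | h
        · have : θ * γ i ≤ 0 := mul_nonpos_of_nonneg_of_nonpos hθ0 h
          simp only [hα']; linarith [hα i]
        · have h2 : θ * γ i ≤ α i := (le_div_iff₀ h).1 (hθmin i h)
          simp only [hα']; linarith
      have hi0s : i0 ∈ s := by
        by_contra h
        exact absurd (hγsupp i0 h) (ne_of_gt hγi0)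
      have hα'i0 : α' i0 = 0 := by
        simp only [hα', hθ]
        field_simp
        ring
      have hsupp' : (Finset.univ.filter fun i => α' i ≠ 0) ⊆ s.erase i0 := by
        intro i hi
        simp only [Finset.mem_filter] at hi
        refine Finset.mem_erase.2 ⟨?_, ?_⟩
        · rintro rfl; exact hi.2 hα'i0
        · by_contra h
          exact hi.2 (by simp [hα', hγsupp i h, (by simpa [hs] using h : α i = 0)])
      have hcard' : (Finset.univ.filter fun i => α' i ≠ 0).card ≤ N := by
        have h1 := Finset.card_le_card hsupp'
        have h2 : (s.erase i0).card = s.card - 1 := Finset.card_erase_of_mem hi0s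
        have h3 : 0 < s.card := Finset.card_pos.2 ⟨i0, hi0s⟩
        omega
      have hsum' : ∑ i, α' i • v i = ∑ i, α i • v i := by
        simp only [hα', sub_smul, Finset.sum_sub_distrib, mul_smul, ← Finset.smul_sum, hγsum,
          smul_zero, sub_zero]
      obtain ⟨t, β, h1, h2, h3, h4⟩ := ih α' hα'0 hcard'
      exact ⟨t, β, h1, h2, h3, h4.trans hsum'⟩


open Topology in
/-- The finitely generated cone is closed. -/
private theorem cone_closed {ι E : Type*} [Fintype ι] [NormedAddCommGroup E] [NormedSpace ℝ E]
    [FiniteDimensional ℝ E] (v : ι → E) :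
    IsClosed {z : E | ∃ α : ι → ℝ, (∀ i, 0 ≤ α i) ∧ z = ∑ i, α i • v i} := by
  classical
  -- the cone is the union of the subcones generated by linearly independent subfamilies
  have key : {z : E | ∃ α : ι → ℝ, (∀ i, 0 ≤ α i) ∧ z = ∑ i, α i • v i} =
      ⋃ t ∈ {t : Finset ι | LinearIndependent ℝ (fun i : t => v i)},
        {z : E | ∃ α : ι → ℝ, (∀ i, 0 ≤ α i) ∧ (∀ i ∉ t, α i = 0) ∧ z = ∑ i, α i • v i} := by
    ext z
    simp only [Set.mem_setOf_eq, Set.mem_iUnion]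
    constructor
    · rintro ⟨α, hα, rfl⟩
      obtain ⟨t, β, h1, h2, h3, h4⟩ :=
        cone_cara_aux v (Finset.univ.filter fun i => α i ≠ 0).card α hα le_rfl
      exact ⟨t, h1, β, h2, h3, h4.symm⟩
    · rintro ⟨t, ht, α, hα, hsupp, rfl⟩
      exact ⟨α, hα, rfl⟩
  rw [key]
  refine Set.Finite.isClosed_biUnion (Set.toFinite _) ?_
  intro t ht
  -- the subcone is the image of the nonnegative orthant under a closed embedding
  set L : (↥t → ℝ) →ₗ[ℝ] E :=
    { toFun := fun β => ∑ i : t, β i • v i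
      map_add' := by intro a b; simp [add_smul, Finset.sum_add_distrib]
      map_smul' := by intro c a; simp [smul_smul, Finset.smul_sum] } with hL
  have hinj : LinearMap.ker L = ⊥ := by
    rw [LinearMap.ker_eq_bot']
    intro g hg
    have := Fintype.linearIndependent_iff.1 ht g hg
    funext i; exact this i
  have hemb : IsClosedEmbedding L := LinearMap.isClosedEmbedding_of_injective hinj
  have horth : IsClosed {β : ↥t → ℝ | ∀ i, 0 ≤ β i} := by
    have : {β : ↥t → ℝ | ∀ i, 0 ≤ β i} = ⋂ i, {β | 0 ≤ β i} := by
      ext β; simp [Set.mem_iInter]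
    rw [this]
    exact isClosed_iInter fun i => isClosed_le continuous_const (continuous_apply i)
  have himg : {z : E | ∃ α : ι → ℝ, (∀ i, 0 ≤ α i) ∧ (∀ i ∉ t, α i = 0) ∧ z = ∑ i, α i • v i} =
      L '' {β : ↥t → ℝ | ∀ i, 0 ≤ β i} := by
    ext z
    simp only [Set.mem_setOf_eq, Set.mem_image]
    constructor
    · rintro ⟨α, hα, hsupp, rfl⟩
      refine ⟨fun i => α i, fun i => hα i, ?_⟩
      show ∑ i : ↥t, α ↑i • v ↑i = ∑ i, α i • v i
      rw [Finset.sum_coe_sort t (fun i => α i • v i)]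
      exact Finset.sum_subset (Finset.subset_univ t) (fun i _ hi => by simp [hsupp i hi])
    · rintro ⟨β, hβ, rfl⟩
      refine ⟨fun i => if h : i ∈ t then β ⟨i, h⟩ else 0,
        fun i => by by_cases hi : i ∈ t <;> simp [hi, hβ], fun i hi => by simp [hi], ?_⟩
      dsimp only
      rw [← Finset.sum_subset (Finset.subset_univ t)
          (fun i _ hi => by simp [hi]),
        ← Finset.sum_coe_sort t (fun i => (if h : i ∈ t then β ⟨i, h⟩ else 0) • v i)]
      exact (Finset.sum_congr rfl fun i _ => by simp [i.2]).symm
  rw [himg]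
  exact hemb.isClosedMap _ horth

/-- Farkas' lemma. -/
private theorem farkas {ι E : Type*} [Fintype ι] [NormedAddCommGroup E] [InnerProductSpace ℝ E]
    [FiniteDimensional ℝ E] (v : ι → E) (c : E)
    (h : ∀ d : E, (∀ i, 0 ≤ ⟪v i, d⟫) → 0 ≤ ⟪c, d⟫) :
    ∃ α : ι → ℝ, (∀ i, 0 ≤ α i) ∧ c = ∑ i, α i • v i := by
  classical
  set K : ConvexCone ℝ E :=
    { carrier := {z : E | ∃ α : ι → ℝ, (∀ i, 0 ≤ α i) ∧ z = ∑ i, α i • v i}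
      smul_mem' := by
        rintro a ha z ⟨α, hα, rfl⟩
        exact ⟨fun i => a * α i, fun i => mul_nonneg ha.le (hα i),
          by simp [Finset.smul_sum, mul_smul]⟩
      add_mem' := by
        rintro z ⟨α, hα, rfl⟩ w ⟨β, hβ, rfl⟩
        exact ⟨fun i => α i + β i, fun i => add_nonneg (hα i) (hβ i),
          by simp [add_smul, Finset.sum_add_distrib]⟩ } with hK
  by_contra hc
  have hc' : c ∉ K := hc ∘ (fun h => h)
  obtain ⟨d, hd1, hd2⟩ : ∃ d, (∀ x ∈ K, 0 ≤ ⟪x, d⟫) ∧ ⟪d, c⟫ < 0 := by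
    obtain ⟨d, h1, h2⟩ := ProperCone.hyperplane_separation' (x₀ := c)
      (⟨K.toPointedCone (ConvexCone.Pointed.of_nonempty_of_isClosed
        ⟨0, 0, fun i => le_rfl, by simp⟩ (cone_closed v)), cone_closed v⟩ : ProperCone ℝ E) hc'
    exact ⟨d, h1, by rw [real_inner_comm]; exact h2⟩
  have hvi : ∀ i, 0 ≤ ⟪v i, d⟫ := by
    intro i
    refine hd1 (v i) ⟨fun j => if j = i then 1 else 0, fun j => by by_cases hj : j = i <;> simp [hj], ?_⟩
    rw [Finset.sum_eq_single i (fun j _ hj => by simp [hj]) (by simp)]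
    simp
  have := h d hvi
  rw [real_inner_comm] at hd2
  linarith


set_option maxHeartbeats 1000000 in
/-- every local minimizer `z*` of `(P_{0/1})` admits a multiplier `α*`
satisfying (KKT-PI) at `z*`. -/
theorem stmt13 {n m : ℕ} (hn : 0 < n) (hm : 0 < m)
    (x : Fin m → EuclideanSpace ℝ (Fin n)) (y : Fin m → ℝ)
    (hy : ∀ i, y i = 1 ∨ y i = -1)
    (lam : ℝ) (hlam : 0 < lam)
    (zs : EuclideanSpace ℝ (Fin n) × ℝ)
    (hloc : ∃ ε > 0, ∀ z : EuclideanSpace ℝ (Fin n) × ℝ,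
      dist z zs ≤ ε → F01 x y lam zs ≤ F01 x y lam z) :
    ∃ αs : EuclideanSpace ℝ (Fin m), KKTPI x y zs αs := by
  classical
  obtain ⟨ε, hε, hloc⟩ := hloc
  have hFin : Nonempty (Fin m) := ⟨⟨0, hm⟩⟩
  -- the key variational inequality
  have key : ∀ (dw : EuclideanSpace ℝ (Fin n)) (db : ℝ),
      (∀ i : Fin m, uu x y zs i = 0 → 0 ≤ y i * (⟪x i, dw⟫ + db)) → 0 ≤ ⟪zs.1, dw⟫ := by
    intro dw db hd
    by_contra hneg
    push_neg at hneg
    have hdw0 : dw ≠ 0 := by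
      intro h
      rw [h, inner_zero_right] at hneg
      exact absurd hneg (lt_irrefl 0)
    have hdwn : 0 < ‖dw‖ ^ 2 := by
      have := norm_pos_iff.mpr hdw0
      positivity
    set M : ℝ := max ‖dw‖ |db| with hM
    have hM0 : 0 ≤ M := le_max_of_le_left (norm_nonneg _)
    set c : Fin m → ℝ := fun i => y i * (⟪x i, dw⟫ + db) with hc
    set bound : Fin m → ℝ :=
      fun i => if uu x y zs i < 0 then (-uu x y zs i) / (|c i| + 1) else 1 with hbound
    have hbpos : ∀ i, 0 < bound i := by
      intro i
      by_cases h : uu x y zs i < 0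
      · have h1 : 0 < -uu x y zs i := by linarith
        simp only [hbound, if_pos h]
        positivity
      · simp [hbound, if_neg h]
    set t0 : ℝ := min (ε / (M + 1)) (Finset.univ.inf' Finset.univ_nonempty bound) with ht0def
    have ht00 : 0 < t0 := by
      apply lt_min
      · positivity
      · rw [Finset.lt_inf'_iff]
        exact fun i _ => hbpos i
    set t : ℝ := min t0 (-(⟪zs.1, dw⟫) / ‖dw‖ ^ 2) with htdef
    have ht : 0 < t := lt_min ht00 (div_pos (by linarith) hdwn)
    set z : EuclideanSpace ℝ (Fin n) × ℝ := (zs.1 + t • dw, zs.2 + t * db) with hz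
    have hu : ∀ i, uu x y z i = uu x y zs i - t * c i := by
      intro i
      simp only [uu, hz, hc, inner_add_left, real_inner_smul_left]
      rw [real_inner_comm dw (x i)]
      ring
    -- the 0/1 loss sum does not increase
    have hsum : ∑ i, l01 (uu x y z i) ≤ ∑ i, l01 (uu x y zs i) := by
      apply Finset.sum_le_sum
      intro i _
      by_cases h0 : 0 < uu x y zs i
      · simp only [l01, if_pos h0]
        split <;> norm_num
      · push_neg at h0
        rcases eq_or_lt_of_le h0 with heq | hlt
        · -- active constraint
          have hci : 0 ≤ c i := hd i heq
          have : uu x y z i ≤ 0 := by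
            rw [hu i, heq, zero_sub, neg_nonpos]
            positivity
          simp only [l01, if_neg (not_lt.2 this)]
          split <;> norm_num
        · -- inactive constraint stays negative for small t
          have htb : t ≤ bound i := le_trans (min_le_left _ _)
            (le_trans (min_le_right _ _) (Finset.inf'_le _ (Finset.mem_univ i)))
          have hbi : bound i = (-uu x y zs i) / (|c i| + 1) := if_pos hlt
          have h1 : t * (|c i| + 1) ≤ -uu x y zs i := by
            rw [hbi] at htb
            have hpos : (0:ℝ) < |c i| + 1 := by positivity
            calc t * (|c i| + 1) ≤ ((-uu x y zs i) / (|c i| + 1)) * (|c i| + 1) := by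
                  apply mul_le_mul_of_nonneg_right htb hpos.le
              _ = -uu x y zs i := by field_simp
          have h2 : t * c i ≥ -(t * (|c i| + 1)) := by
            have : -(|c i| + 1) ≤ c i := by
              have := neg_abs_le (c i)
              linarith
            nlinarith [ht.le]
          have : uu x y z i ≤ 0 := by rw [hu i]; linarith
          simp only [l01, if_neg (not_lt.2 this)]
          split <;> norm_num
    -- z is within the ball
    have hdist : dist z zs ≤ ε := by
      rw [Prod.dist_eq]
      have h1 : dist z.1 zs.1 = t * ‖dw‖ := by
        rw [dist_eq_norm]
        simp only [hz, add_sub_cancel_left, norm_smul, Real.norm_eq_abs, abs_of_pos ht]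
      have h2 : dist z.2 zs.2 = t * |db| := by
        rw [Real.dist_eq]
        simp only [hz, add_sub_cancel_left, abs_mul, abs_of_pos ht]
      have htM : t * M ≤ ε := by
        have ht1 : t ≤ ε / (M + 1) := le_trans (min_le_left _ _) (min_le_left _ _)
        have : t * M ≤ (ε / (M + 1)) * M := mul_le_mul_of_nonneg_right ht1 hM0
        have h3 : (ε / (M + 1)) * M ≤ ε := by
          rw [div_mul_eq_mul_div, div_le_iff₀ (by positivity)]
          nlinarith
        linarith
      rw [h1, h2]
      apply max_le
      · exact le_trans (mul_le_mul_of_nonneg_left (le_max_left _ _) ht.le) htM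
      · exact le_trans (mul_le_mul_of_nonneg_left (le_max_right _ _) ht.le) htM
    -- derive the contradiction
    have hF := hloc z hdist
    simp only [F01] at hF
    have hn2 : ‖zs.1‖ ^ 2 ≤ ‖z.1‖ ^ 2 := by nlinarith [mul_le_mul_of_nonneg_left hsum hlam.le]
    have hexp : ‖z.1‖ ^ 2 = ‖zs.1‖ ^ 2 + 2 * (t * ⟪zs.1, dw⟫) + t ^ 2 * ‖dw‖ ^ 2 := by
      simp only [hz]
      rw [norm_add_sq_real, real_inner_smul_right, norm_smul, Real.norm_eq_abs,
        mul_pow, sq_abs]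
    have h4 : 0 ≤ 2 * ⟪zs.1, dw⟫ + t * ‖dw‖ ^ 2 := by
      have h5 : 0 ≤ t * (2 * ⟪zs.1, dw⟫ + t * ‖dw‖ ^ 2) := by nlinarith
      nlinarith
    have ht2 : t * ‖dw‖ ^ 2 ≤ -(⟪zs.1, dw⟫) := by
      have : t ≤ -(⟪zs.1, dw⟫) / ‖dw‖ ^ 2 := min_le_right _ _
      calc t * ‖dw‖ ^ 2 ≤ (-(⟪zs.1, dw⟫) / ‖dw‖ ^ 2) * ‖dw‖ ^ 2 :=
            mul_le_mul_of_nonneg_right this hdwn.le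
        _ = -(⟪zs.1, dw⟫) := by field_simp
    linarith
  -- apply Farkas' lemma in the product space
  haveI : FiniteDimensional ℝ (WithLp 2 (EuclideanSpace ℝ (Fin n) × ℝ)) :=
    Module.Finite.equiv (WithLp.linearEquiv 2 ℝ (EuclideanSpace ℝ (Fin n) × ℝ)).symm
  set v : {i : Fin m // uu x y zs i = 0} → WithLp 2 (EuclideanSpace ℝ (Fin n) × ℝ) :=
    fun i => (WithLp.equiv 2 (EuclideanSpace ℝ (Fin n) × ℝ)).symm (y i.1 • x i.1, y i.1) with hv
  set cH : WithLp 2 (EuclideanSpace ℝ (Fin n) × ℝ) := (WithLp.equiv 2 (EuclideanSpace ℝ (Fin n) × ℝ)).symm (zs.1, 0) with hcH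
  have hfark : ∀ d : WithLp 2 (EuclideanSpace ℝ (Fin n) × ℝ), (∀ i, 0 ≤ ⟪v i, d⟫) → 0 ≤ ⟪cH, d⟫ := by
    intro d hd
    have h1 : ∀ i : Fin m, uu x y zs i = 0 → 0 ≤ y i * (⟪x i, d.fst⟫ + d.snd) := by
      intro i hi
      have := hd ⟨i, hi⟩
      rw [hv] at this
      simp only [WithLp.prod_inner_apply, WithLp.equiv_symm_apply, WithLp.ofLp_toLp,
        WithLp.ofLp_fst, WithLp.ofLp_snd,
        real_inner_smul_left, RCLike.inner_apply, conj_trivial] at this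
      rw [mul_add]
      linarith
    have h2 := key d.fst d.snd h1
    have hcHi : (inner ℝ cH d : ℝ) = inner ℝ zs.1 d.fst + inner ℝ (0:ℝ) d.snd := by
      rw [hcH]; rfl
    rw [hcHi, inner_zero_left, add_zero]
    exact h2
  obtain ⟨α, hα, hceq⟩ := farkas v cH hfark
  -- unpack the product equation
  have hP : ((zs.1, 0) : EuclideanSpace ℝ (Fin n) × ℝ) =
      ∑ i, α i • ((y i.1 • x i.1, y i.1) : EuclideanSpace ℝ (Fin n) × ℝ) := by
    have := congrArg (WithLp.linearEquiv 2 ℝ (EuclideanSpace ℝ (Fin n) × ℝ)) hceq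
    rw [map_sum] at this
    simpa only [hcH, hv, WithLp.coe_linearEquiv, WithLp.equiv_symm_apply, WithLp.ofLp_smul,
      WithLp.ofLp_toLp, map_smul,
      Equiv.apply_symm_apply] using this
  have h1 : zs.1 = ∑ i, α i • (y i.1 • x i.1) := by
    have := congrArg Prod.fst hP
    simpa [Prod.fst_sum] using this
  have h2 : (0:ℝ) = ∑ i, α i • y i.1 := by
    have := congrArg Prod.snd hP
    simpa [Prod.snd_sum] using this
  -- define the multipliers
  set αs : EuclideanSpace ℝ (Fin m) :=
    WithLp.toLp 2 (fun i => if h : uu x y zs i = 0 then α ⟨i, h⟩ else 0) with hαs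
  have hαs0 : ∀ i, uu x y zs i ≠ 0 → αs i = 0 := fun i hi => dif_neg hi
  have hαs1 : ∀ (i : Fin m) (h : uu x y zs i = 0), αs i = α ⟨i, h⟩ := fun i h => dif_pos h
  have hαspos : ∀ i, 0 ≤ αs i := by
    intro i
    by_cases h : uu x y zs i = 0
    · rw [hαs1 i h]; exact hα _
    · rw [hαs0 i h]
  refine ⟨αs, ?_, ?_, ?_, ?_⟩
  · -- stationarity
    calc zs.1 = ∑ i : {i // uu x y zs i = 0}, α i • (y i.1 • x i.1) := h1
      _ = ∑ i : {i // uu x y zs i = 0}, (αs i.1 * y i.1) • x i.1 :=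
          Finset.sum_congr rfl fun i _ => by rw [hαs1 i.1 i.2, smul_smul]
      _ = ∑ i ∈ Finset.univ.filter (fun i => uu x y zs i = 0), (αs i * y i) • x i :=
          (Finset.sum_subtype (Finset.univ.filter fun i => uu x y zs i = 0)
            (fun i => by simp) (fun i => (αs i * y i) • x i)).symm
      _ = ∑ i, (αs i * y i) • x i :=
          Finset.sum_subset (Finset.filter_subset _ _)
            (fun i _ hi => by simp [hαs0 i (by simpa using hi)])
  · intro i hi
    rcases eq_or_lt_of_le hi with heq | hlt
    · exact ⟨hαspos i, by rw [heq, mul_zero]⟩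
    · exact ⟨hαspos i, by rw [hαs0 i (ne_of_lt hlt), zero_mul]⟩
  · intro i hi
    exact hαs0 i (fun h => hi (le_of_eq h))
  · calc ∑ i, y i * αs i
        = ∑ i ∈ Finset.univ.filter (fun i => uu x y zs i = 0), y i * αs i :=
          (Finset.sum_subset (Finset.filter_subset _ _)
            (fun i _ hi => by simp [hαs0 i (by simpa using hi)])).symm
      _ = ∑ i : {i // uu x y zs i = 0}, y i.1 * αs i.1 :=
          Finset.sum_subtype (Finset.univ.filter fun i => uu x y zs i = 0)
            (fun i => by simp) (fun i => y i * αs i)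
      _ = ∑ i : {i // uu x y zs i = 0}, α i • y i.1 :=
          Finset.sum_congr rfl fun i _ => by rw [hαs1 i.1 i.2, smul_eq_mul]; ring
      _ = 0 := h2.symm



end
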